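/- Let p be a probability vector on n ≥ 2 symbols and let l be any codeword-length vector. If −1 < d' ≤ d with d' ≠ 0 and d ≠ 0, then R^{d'}(p,l) ≤ R^{d}(p,l). Moreover, for every d with −1 < d < 0, R^d(p,l) ≤ ∑_i p_i·l_i − H_1(p), and for every d > 0, R^d(p,l) ≥ ∑_i p_i·l_i − H_1(p), where H_1(p) = −∑_i p_i·log₂ p_i is the Shannon entropy. -/

import Mathlib

open Real Finset

noncomputable def expRedundancy (n : ℕ) (d : ℝ) (p : Fin n → ℝ) (l : Fin n → ℕ) : ℝ :=
  (1 / d) * Real.logb 2 (∑ i, (p i) ^ (1 + d) * (2 : ℝ) ^ (d * (l i : ℝ)))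

noncomputable def shannonEntropy (n : ℕ) (p : Fin n → ℝ) : ℝ :=
  -∑ i, p i * Real.logb 2 (p i)

private lemma one_lt_two' : (1:ℝ) < 2 := one_lt_two

private lemma sum_pos' {n : ℕ} (hn : 0 < n) (p : Fin n → ℝ) (hp : ∀ i, 0 < p i)
    (x : Fin n → ℝ) (hx : ∀ i, 0 < x i) (d : ℝ) :
    0 < ∑ i, p i * x i ^ d := by
  apply Finset.sum_pos
  · intro i _; exact mul_pos (hp i) (Real.rpow_pos_of_pos (hx i) d)
  · exact Finset.univ_nonempty_iff.mpr (Fin.pos_iff_nonempty.mp hn)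

private lemma amgm_log {n : ℕ} (p : Fin n → ℝ) (hp : ∀ i, 0 < p i)
    (hpsum : ∑ i, p i = 1) (x : Fin n → ℝ) (hx : ∀ i, 0 < x i) (d : ℝ) :
    d * (∑ i, p i * Real.logb 2 (x i)) ≤ Real.logb 2 (∑ i, p i * x i ^ d) := by
  have key := Real.geom_mean_le_arith_mean_weighted Finset.univ p (fun i => x i ^ d)
    (fun i _ => (hp i).le) hpsum (fun i _ => (Real.rpow_pos_of_pos (hx i) d).le)
  have hprod : 0 < ∏ i, (x i ^ d) ^ p i :=
    Finset.prod_pos fun i _ => Real.rpow_pos_of_pos (Real.rpow_pos_of_pos (hx i) d) _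
  calc d * (∑ i, p i * Real.logb 2 (x i))
      = Real.logb 2 (∏ i, (x i ^ d) ^ p i) := by
        rw [Real.logb, Real.log_prod
          (fun i _ => (Real.rpow_pos_of_pos (Real.rpow_pos_of_pos (hx i) d) _).ne'),
          Finset.mul_sum, Finset.sum_div]
        congr 1; ext i
        rw [Real.log_rpow (Real.rpow_pos_of_pos (hx i) d), Real.log_rpow (hx i)]
        unfold Real.logb; ring
    _ ≤ Real.logb 2 (∑ i, p i * x i ^ d) :=
        Real.logb_le_logb_of_le one_lt_two' hprod key

private lemma mono_pos {n : ℕ} (hn : 0 < n) (p : Fin n → ℝ) (hp : ∀ i, 0 < p i)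
    (hpsum : ∑ i, p i = 1) (x : Fin n → ℝ) (hx : ∀ i, 0 < x i) {a b : ℝ}
    (ha : 0 < a) (hab : a ≤ b) :
    (1/a) * Real.logb 2 (∑ i, p i * x i ^ a) ≤ (1/b) * Real.logb 2 (∑ i, p i * x i ^ b) := by
  have hb : 0 < b := lt_of_lt_of_le ha hab
  have hq : 1 ≤ b / a := (one_le_div ha).mpr hab
  have key := Real.arith_mean_le_rpow_mean Finset.univ p (fun i => x i ^ a)
    (fun i _ => (hp i).le) hpsum (fun i _ => (Real.rpow_pos_of_pos (hx i) a).le) hq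
  have hSb : 0 < ∑ i, p i * x i ^ b := sum_pos' hn p hp x hx b
  have hSa : 0 < ∑ i, p i * x i ^ a := sum_pos' hn p hp x hx a
  have hrw : ∀ i : Fin n, (x i ^ a) ^ (b/a) = x i ^ b := by
    intro i
    rw [← Real.rpow_mul (hx i).le, mul_div_cancel₀ _ ha.ne']
  simp only [hrw] at key
  have key2 : Real.logb 2 (∑ i, p i * x i ^ a)
      ≤ Real.logb 2 ((∑ i, p i * x i ^ b) ^ (1/(b/a))) :=
    Real.logb_le_logb_of_le one_lt_two' hSa key
  rw [Real.logb_rpow_eq_mul_logb_of_pos hSb] at key2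
  rw [one_div_div] at key2
  calc (1/a) * Real.logb 2 (∑ i, p i * x i ^ a)
      ≤ (1/a) * ((a/b) * Real.logb 2 (∑ i, p i * x i ^ b)) := by
        apply mul_le_mul_of_nonneg_left key2 (by positivity)
    _ = (1/b) * Real.logb 2 (∑ i, p i * x i ^ b) := by
        field_simp

theorem stmt_15 (n : ℕ) (hn : 2 ≤ n)
    (p : Fin n → ℝ) (hp : ∀ i, 0 < p i) (hpsum : ∑ i, p i = 1)
    (l : Fin n → ℕ) (hl : ∀ i, 1 ≤ l i) :
    (∀ d' d : ℝ, -1 < d' → d' ≤ d → d' ≠ 0 → d ≠ 0 →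
      expRedundancy n d' p l ≤ expRedundancy n d p l) ∧
    (∀ d : ℝ, -1 < d → d < 0 →
      expRedundancy n d p l ≤ (∑ i, p i * (l i : ℝ)) - shannonEntropy n p) ∧
    (∀ d : ℝ, 0 < d →
      (∑ i, p i * (l i : ℝ)) - shannonEntropy n p ≤ expRedundancy n d p l) := by
  have hn0 : 0 < n := by omega
  set x : Fin n → ℝ := fun i => p i * (2:ℝ) ^ (l i : ℝ) with hxdef
  have hx : ∀ i, 0 < x i := fun i => mul_pos (hp i) (Real.rpow_pos_of_pos two_pos _)
  have hE : ∀ d : ℝ, expRedundancy n d p l = (1/d) * Real.logb 2 (∑ i, p i * x i ^ d) := by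
    intro d
    unfold expRedundancy
    congr 1
    congr 1
    apply Finset.sum_congr rfl
    intro i _
    rw [hxdef]
    rw [Real.rpow_add (hp i), Real.rpow_one,
      Real.mul_rpow (hp i).le (Real.rpow_pos_of_pos two_pos _).le,
      mul_comm d ((l i : ℝ)), Real.rpow_mul (by norm_num : (0:ℝ) ≤ 2)]
    ring
  have hM : ∑ i, p i * Real.logb 2 (x i) = (∑ i, p i * (l i : ℝ)) - shannonEntropy n p := by
    unfold shannonEntropy
    rw [sub_neg_eq_add, ← Finset.sum_add_distrib]
    apply Finset.sum_congr rfl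
    intro i _
    rw [hxdef]
    rw [Real.logb_mul (hp i).ne' (Real.rpow_pos_of_pos two_pos _).ne',
      Real.logb_rpow (by norm_num) (by norm_num)]
    ring
  have hneg : ∀ d : ℝ, d < 0 →
      expRedundancy n d p l = -((1/(-d)) * Real.logb 2 (∑ i, p i * (x i)⁻¹ ^ (-d))) := by
    intro d hd
    rw [hE d]
    have : ∀ i : Fin n, (x i)⁻¹ ^ (-d) = x i ^ d := by
      intro i
      rw [Real.inv_rpow (hx i).le, Real.rpow_neg (hx i).le, inv_inv]
    simp only [this]
    ring
  have amgm := fun d => amgm_log p hp hpsum x hx d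
  refine ⟨?_, ?_, ?_⟩
  · intro d' d hd'1 hdd hd'0 hd0
    rcases lt_or_gt_of_ne hd'0 with hd'neg | hd'pos
    · rcases lt_or_gt_of_ne hd0 with hdneg | hdpos
      · -- both negative
        rw [hneg d' hd'neg, hneg d hdneg]
        apply neg_le_neg
        exact mono_pos hn0 p hp hpsum _ (fun i => inv_pos.mpr (hx i))
          (by linarith) (by linarith)
      · -- d' < 0 < d
        have h1 : expRedundancy n d' p l ≤ ∑ i, p i * Real.logb 2 (x i) := by
          rw [hE d']
          have hkey := mul_le_mul_of_nonpos_left (amgm d')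
            (le_of_lt (one_div_neg.mpr hd'neg))
          have heq : (1/d') * (d' * ∑ i, p i * Real.logb 2 (x i))
              = ∑ i, p i * Real.logb 2 (x i) := by field_simp
          linarith
        have h2 : ∑ i, p i * Real.logb 2 (x i) ≤ expRedundancy n d p l := by
          rw [hE d]
          rw [one_div, ← div_eq_inv_mul, le_div_iff₀ hdpos]
          linarith [amgm d]
        linarith
    · rw [hE d', hE d]
      exact mono_pos hn0 p hp hpsum x hx hd'pos hdd
  · intro d hd1 hd0
    rw [hE d, ← hM]
    have := amgm d
    rw [div_mul_eq_mul_div, div_le_iff_of_neg hd0]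
    linarith
  · intro d hd
    rw [hE d, ← hM]
    rw [one_div, ← div_eq_inv_mul, le_div_iff₀ hd]
    linarith [amgm d]
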